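/- Let R be an algebra over a commutative domain S and let D = R ⊕ S be the Dorroh extension with multiplication (r1, s1)(r2, s2) = (r1 r2 + s1 r2 + s2 r1, s1 s2). If R is weakly semicommutative, then D is weakly semicommutative: (r1, s1)(r2, s2) = 0 in D implies (r1, s1)(a, b)(r2, s2) is nilpotent for all (a, b) in D. -/

import Mathlib

def WeaklySemicommutative (R : Type*) [Ring R] : Prop :=
  ∀ a b : R, a * b = 0 → ∀ r : R, IsNilpotent (a * r * b)

/-- The Dorroh extension `D = R ⊕ S` of an algebra `R` over a commutative domain `S`,
with multiplication `(r₁, s₁)(r₂, s₂) = (r₁r₂ + s₁r₂ + s₂r₁, s₁s₂)`, is Mathlib's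
`Unitization S R`. -/
theorem weaklySemicommutative_dorroh (S R : Type*) [CommRing S] [IsDomain S]
    [Ring R] [Algebra S R]
    (hR : WeaklySemicommutative R) :
    ∀ x y : Unitization S R, x * y = 0 →
      ∀ z : Unitization S R, IsNilpotent (x * z * y) := by
  intro x y hxy z
  set φ : Unitization S R →ₐ[S] R := (NonUnitalAlgHom.id S R).toAlgHom with hφ
  have key : ∀ a : Unitization S R, φ a = algebraMap S R a.fst + a.snd := fun a => rfl
  have huv : φ x * φ y = 0 := by rw [← map_mul, hxy, map_zero]
  obtain ⟨n, hn⟩ := hR (φ x) (φ y) huv (φ z)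
  have hfstxy : x.fst * y.fst = 0 := by
    have := congrArg (fun u : Unitization S R => u.fst) hxy
    simpa using this
  have hfst : (x * z * y).fst = 0 := by
    simp only [Unitization.fst_mul]
    rw [mul_comm x.fst z.fst, mul_assoc, hfstxy, mul_zero]
  have heq : x * z * y = (((x * z * y).snd : R) : Unitization S R) := by
    ext
    · simpa using hfst
    · simp
  have hsnd : (x * z * y).snd = φ x * φ z * φ y := by
    have h1 := key (x * z * y)
    rw [hfst, map_zero, zero_add] at h1
    rw [← h1, map_mul, map_mul]
  refine ⟨n + 1, ?_⟩
  rw [heq, hsnd]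
  have : ∀ (a : R) (m : ℕ), ((a : Unitization S R)) ^ (m + 1) = ((a ^ (m + 1) : R) : Unitization S R) := by
    intro a m
    induction m with
    | zero => simp
    | succ k ih => rw [pow_succ, ih, ← Unitization.inr_mul, ← pow_succ]
  rw [this, pow_succ, hn, zero_mul, Unitization.inr_zero]
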